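/- Let K ⊆ [−1,1]ⁿ be closed, f continuous on K attaining its minimum f* on K, S* := {x ∈ K : f(x) = f*}, and suppose a Łojasiewicz inequality dist(x, S*)^L ≤ c·(f(x) − f*) holds on K with L ≥ 1, c ≥ 0. Then for every finitely-atomic probability measure ν = Σᵢ aᵢ δ_{xᵢ} on K, choosing for each atom a closest point xᵢ* ∈ S* and setting μ_S := Σᵢ aᵢ δ_{xᵢ*} ∈ 𝓜(S*), it holds for any multi-index α: |∫ x^α dν − ∫ x^α dμ_S| ≤ |α| · c^{1/L} · (∫ f dν − f*)^{1/L}. -/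

import Mathlib

open MeasureTheory

lemma aux_abs_pow_sub_pow (x y : ℝ) (hx : |x| ≤ 1) (hy : |y| ≤ 1) (m : ℕ) :
    |x ^ m - y ^ m| ≤ m * |x - y| := by
  induction m with
  | zero => simp
  | succ k ih =>
    have h1 : x ^ (k + 1) - y ^ (k + 1) = x * (x ^ k - y ^ k) + (x - y) * y ^ k := by ring
    have hyk : |y ^ k| ≤ 1 := by
      rw [abs_pow]; exact pow_le_one₀ (abs_nonneg _) hy
    calc |x ^ (k + 1) - y ^ (k + 1)|
        ≤ |x * (x ^ k - y ^ k)| + |(x - y) * y ^ k| := by rw [h1]; exact abs_add_le _ _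
      _ ≤ 1 * (k * |x - y|) + |x - y| * 1 := by
          rw [abs_mul, abs_mul]
          exact add_le_add
            (mul_le_mul hx ih (abs_nonneg _) zero_le_one)
            (mul_le_mul_of_nonneg_left hyk (abs_nonneg _))
      _ = (↑(k + 1) : ℝ) * |x - y| := by push_cast; ring

lemma aux_abs_prod_sub_prod {ι : Type*} [DecidableEq ι] (s : Finset ι) (u v : ι → ℝ)
    (hu : ∀ i ∈ s, |u i| ≤ 1) (hv : ∀ i ∈ s, |v i| ≤ 1) :
    |∏ i ∈ s, u i - ∏ i ∈ s, v i| ≤ ∑ i ∈ s, |u i - v i| := by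
  induction s using Finset.induction with
  | empty => simp
  | insert j s hi ih =>
    have hus : ∀ i ∈ s, |u i| ≤ 1 := fun i hi0 => hu i (Finset.mem_insert_of_mem hi0)
    have hvs : ∀ i ∈ s, |v i| ≤ 1 := fun i hi0 => hv i (Finset.mem_insert_of_mem hi0)
    have hprodv : |∏ i ∈ s, v i| ≤ 1 := by
      rw [Finset.abs_prod]
      exact Finset.prod_le_one (fun i _ => abs_nonneg _) hvs
    have h1 : u j * ∏ i ∈ s, u i - v j * ∏ i ∈ s, v i
        = u j * (∏ i ∈ s, u i - ∏ i ∈ s, v i) + (u j - v j) * ∏ i ∈ s, v i := by ring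
    rw [Finset.prod_insert hi, Finset.prod_insert hi, Finset.sum_insert hi, h1]
    calc |u j * (∏ i ∈ s, u i - ∏ i ∈ s, v i) + (u j - v j) * ∏ i ∈ s, v i|
        ≤ |u j| * |∏ i ∈ s, u i - ∏ i ∈ s, v i| + |u j - v j| * |∏ i ∈ s, v i| := by
          refine (abs_add_le _ _).trans ?_
          rw [abs_mul, abs_mul]
      _ ≤ 1 * (∑ i ∈ s, |u i - v i|) + |u j - v j| * 1 := by
          exact add_le_add
            (mul_le_mul (hu j (Finset.mem_insert_self j s)) (ih hus hvs)
              (abs_nonneg _) zero_le_one)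
            (mul_le_mul_of_nonneg_left hprodv (abs_nonneg _))
      _ = |u j - v j| + ∑ i ∈ s, |u i - v i| := by ring

/-- Quantitative comparison of the moments of an almost-optimal atomic measure with the
moments of its projection onto the set of minimizers, via a Łojasiewicz inequality. -/
theorem stmt_13 {n l : ℕ} (K : Set (EuclideanSpace ℝ (Fin n)))
    (hK : IsClosed K) (hKsub : ∀ x ∈ K, ∀ i, x i ∈ Set.Icc (-1 : ℝ) 1)
    (f : EuclideanSpace ℝ (Fin n) → ℝ) (hf : ContinuousOn f K)
    (fstar : ℝ) (hlow : ∀ x ∈ K, fstar ≤ f x)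
    (Sstar : Set (EuclideanSpace ℝ (Fin n))) (hSstar : Sstar = {x ∈ K | f x = fstar})
    (hSne : Sstar.Nonempty)
    (c L : ℝ) (hc : 0 ≤ c) (hL : 1 ≤ L)
    (hloja : ∀ x ∈ K, Metric.infDist x Sstar ^ L ≤ c * (f x - fstar))
    (a : Fin l → ℝ) (ha : ∀ i, 0 < a i) (hsum : ∑ i, a i = 1)
    (xs : Fin l → EuclideanSpace ℝ (Fin n)) (hxs : ∀ i, xs i ∈ K)
    (xstar : Fin l → EuclideanSpace ℝ (Fin n))
    (hxstar : ∀ i, xstar i ∈ Sstar ∧ ∀ y ∈ Sstar, dist (xs i) (xstar i) ≤ dist (xs i) y)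
    (α : Fin n → ℕ) :
    |(∑ i, a i * ∏ j, xs i j ^ α j) - ∑ i, a i * ∏ j, xstar i j ^ α j|
      ≤ ((∑ j, α j : ℕ) : ℝ) * c ^ (1 / L) *
        ((∑ i, a i * f (xs i)) - fstar) ^ (1 / L) := by
  have hLpos : (0 : ℝ) < L := lt_of_lt_of_le one_pos hL
  -- coordinate bounds
  have hKabs : ∀ x ∈ K, ∀ j, |x j| ≤ 1 := fun x hx j => by
    have := hKsub x hx j; rw [abs_le]; exact ⟨this.1, this.2⟩
  have hSK : Sstar ⊆ K := by rw [hSstar]; exact fun x hx => hx.1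
  -- distance equals infDist
  set d : Fin l → ℝ := fun i => dist (xs i) (xstar i) with hd
  have hdnn : ∀ i, 0 ≤ d i := fun i => dist_nonneg
  have hdL : ∀ i, d i ^ L ≤ c * (f (xs i) - fstar) := by
    intro i
    have h1 : d i = Metric.infDist (xs i) Sstar := by
      refine le_antisymm ?_ (Metric.infDist_le_dist_of_mem (hxstar i).1)
      have : Nonempty Sstar := hSne.to_subtype
      rw [Metric.infDist_eq_iInf]
      exact le_ciInf fun y => (hxstar i).2 y y.2
    rw [h1]; exact hloja (xs i) (hxs i)
  -- per-atom moment bound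
  have hkey : ∀ i, |(∏ j, xs i j ^ α j) - ∏ j, xstar i j ^ α j|
      ≤ ((∑ j, α j : ℕ) : ℝ) * d i := by
    intro i
    have hcoord : ∀ j, |xs i j - xstar i j| ≤ d i := by
      intro j
      have : dist (xs i j) (xstar i j) ≤ d i := by
        show _ ≤ dist (xs i) (xstar i)
        rw [EuclideanSpace.dist_eq]
        have h2 : dist (xs i j) (xstar i j)
            = Real.sqrt (dist (xs i j) (xstar i j) ^ 2) := by
          rw [Real.sqrt_sq dist_nonneg]
        rw [h2]
        apply Real.sqrt_le_sqrt
        exact Finset.single_le_sum (f := fun j => dist (xs i j) (xstar i j) ^ 2)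
          (fun j _ => sq_nonneg _) (Finset.mem_univ j)
      rwa [Real.dist_eq] at this
    calc |(∏ j, xs i j ^ α j) - ∏ j, xstar i j ^ α j|
        ≤ ∑ j, |xs i j ^ α j - xstar i j ^ α j| := by
          apply aux_abs_prod_sub_prod
          · intro j _; rw [abs_pow]; exact pow_le_one₀ (abs_nonneg _) (hKabs _ (hxs i) j)
          · intro j _; rw [abs_pow]; exact pow_le_one₀ (abs_nonneg _) (hKabs _ (hSK (hxstar i).1) j)
      _ ≤ ∑ j, (α j : ℝ) * d i := by
          apply Finset.sum_le_sum
          intro j _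
          calc |xs i j ^ α j - xstar i j ^ α j| ≤ (α j : ℝ) * |xs i j - xstar i j| :=
                aux_abs_pow_sub_pow _ _ (hKabs _ (hxs i) j) (hKabs _ (hSK (hxstar i).1) j) _
            _ ≤ (α j : ℝ) * d i := by
                have := hcoord j
                exact mul_le_mul_of_nonneg_left this (Nat.cast_nonneg _)
      _ = ((∑ j, α j : ℕ) : ℝ) * d i := by rw [← Finset.sum_mul]; push_cast; ring
  -- assemble
  have hstep1 : |(∑ i, a i * ∏ j, xs i j ^ α j) - ∑ i, a i * ∏ j, xstar i j ^ α j|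
      ≤ ((∑ j, α j : ℕ) : ℝ) * ∑ i, a i * d i := by
    rw [← Finset.sum_sub_distrib]
    calc |∑ i, (a i * ∏ j, xs i j ^ α j - a i * ∏ j, xstar i j ^ α j)|
        ≤ ∑ i, |a i * ∏ j, xs i j ^ α j - a i * ∏ j, xstar i j ^ α j| :=
          Finset.abs_sum_le_sum_abs _ _
      _ ≤ ∑ i, a i * (((∑ j, α j : ℕ) : ℝ) * d i) := by
          apply Finset.sum_le_sum
          intro i _
          rw [← mul_sub, abs_mul, abs_of_pos (ha i)]
          exact mul_le_mul_of_nonneg_left (hkey i) (ha i).le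
      _ = ((∑ j, α j : ℕ) : ℝ) * ∑ i, a i * d i := by
          rw [Finset.mul_sum]; apply Finset.sum_congr rfl; intro i _; ring
  -- Jensen
  have hjensen : ∑ i, a i * d i ≤ (∑ i, a i * d i ^ L) ^ (1 / L) :=
    Real.arith_mean_le_rpow_mean Finset.univ a d (fun i _ => (ha i).le) hsum
      (fun i _ => hdnn i) hL
  have hsum2 : ∑ i, a i * d i ^ L ≤ c * ((∑ i, a i * f (xs i)) - fstar) := by
    have : ∑ i, a i * (c * (f (xs i) - fstar)) = c * ((∑ i, a i * f (xs i)) - fstar) := by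
      have h2 : ∑ i, a i * (c * (f (xs i) - fstar))
          = ∑ i, (c * (a i * f (xs i)) - c * (a i * fstar)) := by
        apply Finset.sum_congr rfl; intro i _; ring
      rw [h2, Finset.sum_sub_distrib, ← Finset.mul_sum, ← Finset.mul_sum,
        ← Finset.sum_mul, hsum, one_mul, ← mul_sub]
    rw [← this]
    exact Finset.sum_le_sum fun i _ =>
      mul_le_mul_of_nonneg_left (hdL i) (ha i).le
  have hsumd_nn : 0 ≤ ∑ i, a i * d i ^ L :=
    Finset.sum_nonneg fun i _ => mul_nonneg (ha i).le (Real.rpow_nonneg (hdnn i) L)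
  have hstep2 : (∑ i, a i * d i ^ L) ^ (1 / L)
      ≤ c ^ (1 / L) * ((∑ i, a i * f (xs i)) - fstar) ^ (1 / L) := by
    have hrnn : 0 ≤ (∑ i, a i * f (xs i)) - fstar := by
      have h3 : fstar = ∑ i, a i * fstar := by rw [← Finset.sum_mul, hsum, one_mul]
      have h4 : ∑ i, a i * fstar ≤ ∑ i, a i * f (xs i) :=
        Finset.sum_le_sum fun i _ =>
          mul_le_mul_of_nonneg_left (hlow (xs i) (hxs i)) (ha i).le
      linarith
    rw [← Real.mul_rpow hc hrnn]
    exact Real.rpow_le_rpow hsumd_nn hsum2 (by positivity)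
  have hcast : (0:ℝ) ≤ ((∑ j, α j : ℕ) : ℝ) := Nat.cast_nonneg _
  calc |(∑ i, a i * ∏ j, xs i j ^ α j) - ∑ i, a i * ∏ j, xstar i j ^ α j|
      ≤ ((∑ j, α j : ℕ) : ℝ) * ∑ i, a i * d i := hstep1
    _ ≤ ((∑ j, α j : ℕ) : ℝ) * ((∑ i, a i * d i ^ L) ^ (1 / L)) :=
        mul_le_mul_of_nonneg_left hjensen hcast
    _ ≤ ((∑ j, α j : ℕ) : ℝ) * (c ^ (1 / L) * ((∑ i, a i * f (xs i)) - fstar) ^ (1 / L)) :=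
        mul_le_mul_of_nonneg_left hstep2 hcast
    _ = ((∑ j, α j : ℕ) : ℝ) * c ^ (1 / L) * ((∑ i, a i * f (xs i)) - fstar) ^ (1 / L) := by
        ring
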